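/- Let T : ℝ → ℝ be defined by T(t) = (3/2)t if t ≤ 2/3 and T(t) = 2 - (3/2)t if t > 2/3. Then the set of preimages ⋃_{n ≥ 0} T^{-n}({4/5}) is dense in the open interval (0, 4/3). -/
import Mathlib


noncomputable def T (t : ℝ) : ℝ := if t ≤ 2/3 then 3/2 * t else 2 - 3/2 * t

lemma pbL {s' : ℝ} (h1 : s' ≤ 1) : T (2/3 * s') = s' := by
  have h : (2:ℝ)/3 * s' ≤ 2/3 := by linarith
  rw [T, if_pos h]; ring

lemma pbR {s' : ℝ} (h0 : 0 ≤ s') (h1 : s' ≤ 1) : T (4/3 - 2/3 * s') = s' := by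
  by_cases h : (4/3 - 2/3 * s' : ℝ) ≤ 2/3
  · have hs : s' = 1 := le_antisymm h1 (by linarith)
    rw [T, if_pos h, hs]; norm_num
  · rw [T, if_neg h]; ring

lemma key : ∀ N : ℕ, ∀ a b : ℝ, 0 ≤ a → b ≤ 4/3 → (4/3) * (8/9)^N ≤ b - a →
    ∃ s ∈ Set.Icc a b, ∃ n : ℕ, T^[n] s = 4/5 := by
  intro N
  induction N with
  | zero =>
    intro a b ha hb hlen
    simp only [pow_zero, mul_one] at hlen
    exact ⟨4/5, ⟨by linarith, by linarith⟩, 0, rfl⟩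
  | succ N ih =>
    intro a b ha hb hlen
    have hrpos : (0:ℝ) < (8/9)^N := by positivity
    rw [pow_succ] at hlen
    by_cases hb2 : b ≤ 2/3
    · obtain ⟨s', hs', n, hn⟩ := ih (3/2*a) (3/2*b) (by linarith) (by linarith)
        (by nlinarith)
      refine ⟨2/3*s', ⟨by linarith [hs'.1], by linarith [hs'.2]⟩, n+1, ?_⟩
      rw [Function.iterate_succ_apply, pbL (by linarith [hs'.2])]
      exact hn
    · push_neg at hb2
      by_cases ha2 : 2/3 ≤ a
      · obtain ⟨s', hs', n, hn⟩ := ih (2 - 3/2*b) (2 - 3/2*a) (by linarith) (by linarith)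
          (by nlinarith)
        refine ⟨4/3 - 2/3*s', ⟨by linarith [hs'.2], by linarith [hs'.1]⟩, n+1, ?_⟩
        rw [Function.iterate_succ_apply,
          pbR (by linarith [hs'.1]) (by linarith [hs'.2])]
        exact hn
      · push_neg at ha2
        by_cases h45 : 4/5 ≤ b
        · exact ⟨4/5, ⟨by linarith, h45⟩, 0, rfl⟩
        · push_neg at h45
          by_cases hside : b - 2/3 ≤ 2/3 - a
          · -- left half [a, 2/3] is at least half
            by_cases ha8 : a ≤ 8/15
            · refine ⟨8/15, ⟨ha8, by linarith⟩, 1, ?_⟩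
              have h := pbL (s' := 4/5) (by norm_num)
              norm_num at h ⊢
              convert h using 2 <;> norm_num
            · push_neg at ha8
              obtain ⟨s'', hs'', n, hn⟩ := ih (1/2) (2 - 9/4*a) (by norm_num)
                (by linarith) (by nlinarith)
              have hu : 2 - 9/4*a ≤ 4/5 := by linarith
              have h1 : T (4/3 - 2/3*s'') = s'' :=
                pbR (by linarith [hs''.1]) (by linarith [hs''.2])
              have h2 : T (2/3 * (4/3 - 2/3*s'')) = 4/3 - 2/3*s'' :=
                pbL (by linarith [hs''.1])
              refine ⟨2/3 * (4/3 - 2/3*s''), ⟨by linarith [hs''.2], by linarith [hs''.1]⟩,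
                n+2, ?_⟩
              rw [Function.iterate_succ_apply, h2, Function.iterate_succ_apply, h1]
              exact hn
          · push_neg at hside
            obtain ⟨s'', hs'', n, hn⟩ := ih (1/2) (9/4*b - 1) (by norm_num)
              (by linarith) (by nlinarith)
            have hu : 9/4*b - 1 ≤ 4/5 := by linarith
            have h1 : T (4/3 - 2/3*s'') = s'' :=
              pbR (by linarith [hs''.1]) (by linarith [hs''.2])
            have h2 : T (4/3 - 2/3 * (4/3 - 2/3*s'')) = 4/3 - 2/3*s'' :=
              pbR (by linarith [hs''.2]) (by linarith [hs''.1])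
            refine ⟨4/3 - 2/3 * (4/3 - 2/3*s''), ⟨by linarith [hs''.1], by linarith [hs''.2]⟩,
              n+2, ?_⟩
            rw [Function.iterate_succ_apply, h2, Function.iterate_succ_apply, h1]
            exact hn

theorem backward_orbit_of_fixed_point_dense :
    Set.Ioo (0 : ℝ) (4/3) ⊆ closure {s : ℝ | ∃ n : ℕ, T^[n] s = 4/5} := by
  intro x hx
  obtain ⟨hx0, hx1⟩ := hx
  rw [Metric.mem_closure_iff]
  intro ε hε
  set δ : ℝ := min ε (min x (4/3 - x)) / 2 with hδdef
  have hδ : 0 < δ := by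
    have : 0 < min ε (min x (4/3 - x)) := lt_min hε (lt_min hx0 (by linarith))
    positivity
  have hδε : δ ≤ ε / 2 := by
    have := min_le_left ε (min x (4/3 - x))
    rw [hδdef]; linarith
  have hδx : δ ≤ x / 2 := by
    have := (min_le_right ε (min x (4/3 - x))).trans (min_le_left x (4/3 - x))
    rw [hδdef]; linarith
  have hδx' : δ ≤ (4/3 - x) / 2 := by
    have := (min_le_right ε (min x (4/3 - x))).trans (min_le_right x (4/3 - x))
    rw [hδdef]; linarith
  obtain ⟨N, hN⟩ := exists_pow_lt_of_lt_one (show (0:ℝ) < 3/2 * δ by linarith)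
    (show (8:ℝ)/9 < 1 by norm_num)
  obtain ⟨s, hs, n, hn⟩ := key N (x - δ) (x + δ) (by linarith) (by linarith)
    (by nlinarith)
  refine ⟨s, ⟨n, hn⟩, ?_⟩
  obtain ⟨h1, h2⟩ := hs
  rw [Real.dist_eq, abs_lt]
  constructor <;> linarith
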